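/- Let J : P → P̃ = ℝ^{2n+2} be the embedding J(x^0, p_1,…,p_n, x^1,…,x^n) = (p_0 = 1, p_1,…,p_n, x^0, x^1,…,x^n). Then: (i) J*θ̃ = θ, i.e. θ̃(J(m))(DJ v) = θ(m)(v) for all m ∈ P and v ∈ ℝ^{2n+1}; (ii) J*G̃ = G, i.e. ⟨DJ u, G̃(J(m)) DJ v⟩ = ⟨u, G(m) v⟩ for all m, u, v. -/
import Mathlib


/-!
Statement 11: The embedding `J : P → P̃ = ℝ^{2n+2}`,
`J(x^0, p_1,…,p_n, x^1,…,x^n) = (p_0 = 1, p_1,…,p_n, x^0, x^1,…,x^n)`, satisfies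
`J*θ̃ = θ` and `J*G̃ = G`.
-/

abbrev Idx (n : ℕ) : Type := Unit ⊕ (Fin n ⊕ Fin n)
abbrev Pt (n : ℕ) : Type := Idx n → ℝ

/-- Index type for the symplectization `P̃ = ℝ^{2n+2}`, block ordering `(p; x)`. -/
abbrev Idx2 (n : ℕ) : Type := Fin (n + 1) ⊕ Fin (n + 1)
abbrev Pt2 (n : ℕ) : Type := Idx2 n → ℝ

/-- The Mrugala metric `G = [[1, 0, pᵀ], [0, 0ₙ, Iₙ], [p, Iₙ, p pᵀ]]` on `P`. -/
def Gmat (n : ℕ) (m : Pt n) : Matrix (Idx n) (Idx n) ℝ :=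
  Matrix.of fun a b =>
    match a, b with
    | Sum.inl _, Sum.inl _ => 1
    | Sum.inl _, Sum.inr (Sum.inl _) => 0
    | Sum.inl _, Sum.inr (Sum.inr j) => m (Sum.inr (Sum.inl j))
    | Sum.inr (Sum.inl _), Sum.inl _ => 0
    | Sum.inr (Sum.inl _), Sum.inr (Sum.inl _) => 0
    | Sum.inr (Sum.inl i), Sum.inr (Sum.inr j) => if i = j then 1 else 0
    | Sum.inr (Sum.inr i), Sum.inl _ => m (Sum.inr (Sum.inl i))
    | Sum.inr (Sum.inr i), Sum.inr (Sum.inl j) => if i = j then 1 else 0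
    | Sum.inr (Sum.inr i), Sum.inr (Sum.inr j) =>
        m (Sum.inr (Sum.inl i)) * m (Sum.inr (Sum.inl j))

/-- The lifted metric `G̃ = [[0, I], [I, p pᵀ]]` on `P̃`, block ordering `(p; x)`. -/
def Gt (n : ℕ) (m : Pt2 n) : Matrix (Idx2 n) (Idx2 n) ℝ :=
  Matrix.of fun a b =>
    match a, b with
    | Sum.inl _, Sum.inl _ => 0
    | Sum.inl i, Sum.inr j => if i = j then 1 else 0
    | Sum.inr i, Sum.inl j => if i = j then 1 else 0
    | Sum.inr i, Sum.inr j => m (Sum.inl i) * m (Sum.inl j)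

/-- The contact covector on `P`: `θ(m)(v) = v^{x^0} + Σ p_l v^{x^l}`. -/
noncomputable def thetaAp {n : ℕ} (m : Pt n) (v : Pt n) : ℝ :=
  v (Sum.inl ()) + ∑ l, m (Sum.inr (Sum.inl l)) * v (Sum.inr (Sum.inr l))

/-- The 1-form `θ̃ = Σ_{i=0}^n p_i dx^i` on `P̃`. -/
noncomputable def thetaTAp {n : ℕ} (m : Pt2 n) (v : Pt2 n) : ℝ :=
  ∑ i, m (Sum.inl i) * v (Sum.inr i)

/-- The embedding `J : P → P̃` as the affine subspace `p_0 = 1`. -/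
def Jemb {n : ℕ} (m : Pt n) : Pt2 n := fun a =>
  match a with
  | Sum.inl i => (Fin.cons 1 (fun k => m (Sum.inr (Sum.inl k))) : Fin (n + 1) → ℝ) i
  | Sum.inr i => (Fin.cons (m (Sum.inl ())) (fun k => m (Sum.inr (Sum.inr k))) : Fin (n + 1) → ℝ) i

/-- The (constant) derivative `DJ` of the affine embedding `J`. -/
def DJ {n : ℕ} (v : Pt n) : Pt2 n := fun a =>
  match a with
  | Sum.inl i => (Fin.cons 0 (fun k => v (Sum.inr (Sum.inl k))) : Fin (n + 1) → ℝ) i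
  | Sum.inr i => (Fin.cons (v (Sum.inl ())) (fun k => v (Sum.inr (Sum.inr k))) : Fin (n + 1) → ℝ) i

theorem symplectization_pullbacks (n : ℕ) (hn : 1 ≤ n) :
    (∀ (m : Pt n) (v : Pt n), thetaTAp (Jemb m) (DJ v) = thetaAp m v) ∧
    (∀ (m : Pt n) (u v : Pt n),
      (∑ a, ∑ b, DJ u a * Gt n (Jemb m) a b * DJ v b)
        = ∑ a, ∑ b, u a * Gmat n m a b * v b) := by
  constructor
  · intro m v
    simp [thetaTAp, thetaAp, Jemb, DJ, Fin.sum_univ_succ]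
  · intro m u v
    simp only [Fintype.sum_sum_type, Gt, Gmat, DJ, Jemb, Matrix.of_apply,
      Fin.sum_univ_succ, Fin.cons_zero, Fin.cons_succ, mul_ite, ite_mul,
      mul_zero, zero_mul, mul_one, one_mul, Finset.sum_ite_eq, Finset.sum_ite_eq',
      Finset.mem_univ, if_true, Fin.succ_ne_zero, Fin.succ_inj, if_false,
      Finset.sum_add_distrib, zero_add, add_zero, Finset.mul_sum, Finset.sum_mul]
    have h0 : ∀ x : Fin n, ((0 : Fin (n+1)) = x.succ) = False := fun x =>
      eq_false (Ne.symm (Fin.succ_ne_zero x))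
    simp only [h0, if_false, Finset.sum_const_zero, Finset.univ_unique,
      Finset.sum_singleton, PUnit.default_eq_unit, zero_add, add_zero]
    ring
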